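/- Let ν ∈ ℝ with 0 ≤ ν < 1, and let G, G_N, Δ_G ∈ ℝ satisfy G ≥ 0, 0 ≤ Δ_G ≤ G_N, and |G_N − G| ≤ Δ_G. Define the truth stress intensity factor SIF = √(G/(1−ν²)), the reduced basis prediction SIF_N = (√(G_N+Δ_G) + √(G_N−Δ_G)) / (2√(1−ν²)), and the estimator Δ_SIF = (√(G_N+Δ_G) − √(G_N−Δ_G)) / (2√(1−ν²)). Then |SIF_N − SIF| ≤ Δ_SIF. -/

import Mathlib

/-- Rigor of the stress intensity factor error bound derived from a rigorous
energy release rate bound: `|SIF_N − SIF| ≤ Δ_SIF`. -/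
theorem sif_error_bound
    (ν G GN ΔG : ℝ) (hν0 : 0 ≤ ν) (hν1 : ν < 1)
    (hG : 0 ≤ G) (hΔG0 : 0 ≤ ΔG) (hΔGN : ΔG ≤ GN)
    (hbound : |GN - G| ≤ ΔG) :
    |(Real.sqrt (GN + ΔG) + Real.sqrt (GN - ΔG)) / (2 * Real.sqrt (1 - ν ^ 2)) -
        Real.sqrt (G / (1 - ν ^ 2))| ≤
      (Real.sqrt (GN + ΔG) - Real.sqrt (GN - ΔG)) / (2 * Real.sqrt (1 - ν ^ 2)) := by
  have hs : 0 < 1 - ν ^ 2 := by nlinarith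
  have hss : 0 < Real.sqrt (1 - ν ^ 2) := Real.sqrt_pos.mpr hs
  obtain ⟨h1, h2⟩ := abs_le.mp hbound
  have hbG : G ≤ GN + ΔG := by linarith
  have hGa : GN - ΔG ≤ G := by linarith
  have ha : Real.sqrt G ≤ Real.sqrt (GN + ΔG) := Real.sqrt_le_sqrt hbG
  have hb : Real.sqrt (GN - ΔG) ≤ Real.sqrt G := Real.sqrt_le_sqrt hGa
  have hdiv : Real.sqrt (G / (1 - ν ^ 2)) = Real.sqrt G / Real.sqrt (1 - ν ^ 2) :=
    Real.sqrt_div hG _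
  have heq : (Real.sqrt (GN + ΔG) + Real.sqrt (GN - ΔG)) / (2 * Real.sqrt (1 - ν ^ 2)) -
      Real.sqrt G / Real.sqrt (1 - ν ^ 2) =
      ((Real.sqrt (GN + ΔG) + Real.sqrt (GN - ΔG)) - 2 * Real.sqrt G) /
        (2 * Real.sqrt (1 - ν ^ 2)) := by
    field_simp
  rw [hdiv, heq, abs_div, abs_of_pos (mul_pos two_pos hss)]
  gcongr
  rw [abs_le]
  constructor <;> linarith
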